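/- Let (U_k^(1), V_k^(1), E_k) and (U_k^(2), V_k^(2), E_k), k=1,…,p, be two proper weak regular multisplittings of a nonnegative semimonotone matrix A ∈ ℝ^{m×n} with R(E_k) ⊆ R(Aᵀ) for each k. If V_k^(2) ≥ V_k^(1) for each k, then ρ(H₁) ≤ ρ(H₂) < 1, where H_i = Σ_{k=1}^p E_k [U_k^(i)]† V_k^(i). -/

import Mathlib

open Matrix Polynomial

/-- `X` is the Moore-Penrose inverse of `A`. -/
def IsMP {m n : ℕ} (A : Matrix (Fin m) (Fin n) ℝ) (X : Matrix (Fin n) (Fin m) ℝ) : Prop :=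
  A * X * A = A ∧ X * A * X = X ∧ (A * X)ᵀ = A * X ∧ (X * A)ᵀ = X * A

/-- `A = U - V` is a proper splitting: `R(U)=R(A)` and `N(U)=N(A)`. -/
def ProperSplitting {m n : ℕ} (A U V : Matrix (Fin m) (Fin n) ℝ) : Prop :=
  A = U - V ∧ LinearMap.range U.mulVecLin = LinearMap.range A.mulVecLin ∧
    LinearMap.ker U.mulVecLin = LinearMap.ker A.mulVecLin

/-- `μ : ℂ` is an eigenvalue of the real matrix `M`. -/
def IsEigen {n : ℕ} (M : Matrix (Fin n) (Fin n) ℝ) (μ : ℂ) : Prop :=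
  ((M.map (algebraMap ℝ ℂ)).charpoly).IsRoot μ

/-- The spectral radius of a real square matrix. -/
noncomputable def specRad {n : ℕ} (M : Matrix (Fin n) (Fin n) ℝ) : ℝ :=
  sSup {r : ℝ | ∃ μ : ℂ, IsEigen M μ ∧ r = ‖μ‖}

/-- Entrywise nonnegativity. -/
def EntryNonneg {m n : ℕ} (A : Matrix (Fin m) (Fin n) ℝ) : Prop := ∀ i j, 0 ≤ A i j

/-- Entrywise order. -/
def EntryLE {m n : ℕ} (A B : Matrix (Fin m) (Fin n) ℝ) : Prop := ∀ i j, A i j ≤ B i j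

/-- Entrywise strict order. -/
def EntryLT {m n : ℕ} (A B : Matrix (Fin m) (Fin n) ℝ) : Prop := ∀ i j, A i j < B i j


open Filter
open scoped ENNReal NNReal

attribute [local instance] Matrix.linftyOpNormedRing Matrix.linftyOpNormedAlgebra

section AuxSpec

lemma eval_charpoly' {n : ℕ} {K : Type*} [Field K] (M : Matrix (Fin n) (Fin n) K) (t : K) :
    M.charpoly.eval t = (t • (1 : Matrix (Fin n) (Fin n) K) - M).det := by
  rw [Matrix.charpoly, ← Polynomial.coe_evalRingHom, RingHom.map_det]
  congr 1
  ext i j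
  by_cases h : i = j
  · subst h; simp [Matrix.charmatrix_apply_eq, Matrix.one_apply, Matrix.smul_apply]
  · simp [Matrix.charmatrix_apply_ne _ _ _ h, Matrix.one_apply_ne h, Matrix.smul_apply]

lemma isEigen_iff_det {n : ℕ} (M : Matrix (Fin n) (Fin n) ℝ) (μ : ℂ) :
    IsEigen M μ ↔ (μ • (1 : Matrix (Fin n) (Fin n) ℂ) - M.map (algebraMap ℝ ℂ)).det = 0 := by
  rw [IsEigen, Polynomial.IsRoot, eval_charpoly']

lemma eigen_exists_vec {n : ℕ} {M : Matrix (Fin n) (Fin n) ℝ} {μ : ℂ} (h : IsEigen M μ) :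
    ∃ v : Fin n → ℂ, v ≠ 0 ∧ (M.map (algebraMap ℝ ℂ)) *ᵥ v = μ • v := by
  rw [isEigen_iff_det] at h
  obtain ⟨v, hv, hv2⟩ := (Matrix.exists_mulVec_eq_zero_iff).2 h
  refine ⟨v, hv, ?_⟩
  have h0 : (μ • (1 : Matrix (Fin n) (Fin n) ℂ)) *ᵥ v - (M.map (algebraMap ℝ ℂ)) *ᵥ v = 0 := by
    rw [← Matrix.sub_mulVec]; exact hv2
  have h1 : (μ • (1 : Matrix (Fin n) (Fin n) ℂ)) *ᵥ v = μ • v := by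
    rw [Matrix.smul_mulVec, Matrix.one_mulVec]
  rw [h1] at h0
  exact (sub_eq_zero.mp h0).symm

lemma eigen_abs_le {n : ℕ} {M : Matrix (Fin n) (Fin n) ℝ} (hM : ∀ i j, 0 ≤ M i j)
    {x : Fin n → ℝ} (hx : ∀ i, 0 < x i) {c : ℝ}
    (hMx : ∀ i, (M *ᵥ x) i ≤ c * x i) {μ : ℂ} (hμ : IsEigen M μ) :
    ‖μ‖ ≤ c := by
  obtain ⟨v, hv0, hveq⟩ := eigen_exists_vec hμ
  obtain ⟨j, hj⟩ := Function.ne_iff.mp hv0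
  have hne : (Finset.univ : Finset (Fin n)).Nonempty := ⟨j, Finset.mem_univ j⟩
  obtain ⟨i, -, hi⟩ := Finset.exists_max_image Finset.univ
    (fun l => ‖v l‖ / x l) hne
  set t := ‖v i‖ / x i with ht
  have htpos : 0 < t := lt_of_lt_of_le
    (div_pos (norm_pos_iff.mpr hj) (hx j)) (hi j (Finset.mem_univ j))
  have hbound : ∀ l, ‖v l‖ ≤ t * x l := by
    intro l
    have h2 := hi l (Finset.mem_univ l)
    calc ‖v l‖ = ‖v l‖ / x l * x l :=
          (div_mul_cancel₀ _ (ne_of_gt (hx l))).symm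
      _ ≤ t * x l := mul_le_mul_of_nonneg_right h2 (le_of_lt (hx l))
  have hvi : ‖v i‖ = t * x i := by
    rw [ht]; exact (div_mul_cancel₀ _ (ne_of_gt (hx i))).symm
  have key : ‖μ‖ * (t * x i) ≤ t * (c * x i) := by
    rw [← hvi]
    have h1 : ‖μ‖ * ‖v i‖ = ‖(μ • v) i‖ := by
      simp [Pi.smul_apply, smul_eq_mul, _root_.map_mul]
    rw [h1, ← hveq]
    have h2 : (M.map (algebraMap ℝ ℂ) *ᵥ v) i = ∑ l, (M i l : ℂ) * v l := by
      simp [Matrix.mulVec, dotProduct, Matrix.map_apply]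
    rw [h2]
    calc ‖∑ l, (M i l : ℂ) * v l‖ ≤ ∑ l, ‖(M i l : ℂ) * v l‖ :=
          norm_sum_le _ _
      _ ≤ ∑ l, M i l * (t * x l) := by
          apply Finset.sum_le_sum
          intro l _
          rw [norm_mul, Complex.norm_real, Real.norm_eq_abs, abs_of_nonneg (hM i l)]
          exact mul_le_mul_of_nonneg_left (hbound l) (hM i l)
      _ = t * ∑ l, M i l * x l := by
          rw [Finset.mul_sum]; congr 1; ext l; ring
      _ ≤ t * (c * x i) := by
          apply mul_le_mul_of_nonneg_left _ (le_of_lt htpos)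
          exact hMx i
  have hpos : 0 < t * x i := mul_pos htpos (hx i)
  nlinarith [key, hpos]

lemma bddAbove_eigset {n : ℕ} (M : Matrix (Fin n) (Fin n) ℝ) :
    BddAbove {r : ℝ | ∃ μ : ℂ, IsEigen M μ ∧ r = ‖μ‖} := by
  have hfin : {μ : ℂ | IsEigen M μ}.Finite :=
    Polynomial.finite_setOf_isRoot (Matrix.charpoly_monic _).ne_zero
  refine Set.Finite.bddAbove (Set.Finite.subset (hfin.image (‖·‖)) ?_)
  rintro r ⟨μ, hμ, rfl⟩
  exact ⟨μ, hμ, rfl⟩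

lemma abs_le_specRad {n : ℕ} {M : Matrix (Fin n) (Fin n) ℝ} {μ : ℂ} (hμ : IsEigen M μ) :
    ‖μ‖ ≤ specRad M :=
  le_csSup (bddAbove_eigset M) ⟨μ, hμ, rfl⟩

lemma specRad_nonneg {n : ℕ} (M : Matrix (Fin n) (Fin n) ℝ) : 0 ≤ specRad M := by
  apply Real.sSup_nonneg
  rintro r ⟨μ, hμ, rfl⟩
  exact norm_nonneg μ

lemma specRad_le_test {n : ℕ} {M : Matrix (Fin n) (Fin n) ℝ} (hM : ∀ i j, 0 ≤ M i j)
    {x : Fin n → ℝ} (hx : ∀ i, 0 < x i) {c : ℝ} (hc0 : 0 ≤ c)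
    (hMx : ∀ i, (M *ᵥ x) i ≤ c * x i) : specRad M ≤ c := by
  apply Real.sSup_le _ hc0
  rintro r ⟨μ, hμ, rfl⟩
  exact eigen_abs_le hM hx hMx hμ

lemma entry_nnnorm_le_linfty {n : ℕ} (A : Matrix (Fin n) (Fin n) ℂ) (i j : Fin n) :
    ‖A i j‖₊ ≤ ‖A‖₊ := by
  rw [Matrix.linfty_opNNNorm_def]
  calc ‖A i j‖₊ ≤ ∑ l, ‖A i l‖₊ :=
      Finset.single_le_sum (f := fun l => ‖A i l‖₊) (fun l _ => zero_le) (Finset.mem_univ j)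
    _ ≤ _ := Finset.le_sup (f := fun i => ∑ l, ‖A i l‖₊) (Finset.mem_univ i)

lemma entry_abs_le_linfty {n : ℕ} (A : Matrix (Fin n) (Fin n) ℂ) (i j : Fin n) :
    ‖A i j‖ ≤ ‖A‖ := entry_nnnorm_le_linfty A i j

lemma algebraMap_matrix_smul_one {n : ℕ} (μ : ℂ) :
    algebraMap ℂ (Matrix (Fin n) (Fin n) ℂ) μ = μ • (1 : Matrix (Fin n) (Fin n) ℂ) := by
  ext i j
  by_cases h : i = j
  · subst h; simp [Matrix.algebraMap_eq_diagonal, Matrix.one_apply, Matrix.smul_apply]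
  · simp [Matrix.algebraMap_eq_diagonal, Matrix.diagonal_apply_ne _ h,
      Matrix.one_apply_ne h, Matrix.smul_apply]

lemma pow_entry_small {n : ℕ} {Q : Matrix (Fin n) (Fin n) ℝ} {r : ℝ} (hr0 : 0 ≤ r) (hr1 : r < 1)
    (hspec : ∀ μ : ℂ, IsEigen Q μ → ‖μ‖ ≤ r) :
    ∀ ε : ℝ, 0 < ε → ∃ N : ℕ, 1 ≤ N ∧ ∀ i j, |(Q ^ N) i j| ≤ ε := by
  intro ε hε
  set QC := Q.map (algebraMap ℝ ℂ) with hQC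
  have hsr : spectralRadius ℂ QC ≤ ENNReal.ofReal r := by
    rw [spectralRadius]
    refine iSup₂_le fun μ hμ => ?_
    have hdet : (μ • (1 : Matrix (Fin n) (Fin n) ℂ) - QC).det = 0 := by
      by_contra hd
      exact (spectrum.mem_iff.mp hμ)
        (by rw [algebraMap_matrix_smul_one]
            exact (Matrix.isUnit_iff_isUnit_det _).mpr (Ne.isUnit hd))
    have heig : IsEigen Q μ := by
      rw [IsEigen, Polynomial.IsRoot, eval_charpoly']; exact hdet
    have h6 := hspec μ heig
    rw [← enorm_eq_nnnorm, ← ofReal_norm]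
    exact ENNReal.ofReal_le_ofReal h6
  set r' := (r + 1) / 2 with hr'
  have hr'0 : 0 ≤ r' := by rw [hr']; linarith
  have hr'1 : r' < 1 := by rw [hr']; linarith
  have hrr' : r < r' := by rw [hr']; linarith
  have hgel := spectrum.pow_nnnorm_pow_one_div_tendsto_nhds_spectralRadius QC
  have hlt : spectralRadius ℂ QC < ENNReal.ofReal r' :=
    lt_of_le_of_lt hsr (by exact_mod_cast ENNReal.ofReal_lt_ofReal_iff_of_nonneg hr0 |>.mpr hrr')
  have hev1 : ∀ᶠ N : ℕ in atTop, (‖QC ^ N‖₊ : ℝ≥0∞) ^ (1 / (N : ℝ)) < ENNReal.ofReal r' :=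
    hgel.eventually_lt_const hlt
  have hev2 : ∀ᶠ N : ℕ in atTop, r' ^ N < ε :=
    (tendsto_pow_atTop_nhds_zero_of_lt_one hr'0 hr'1).eventually_lt_const hε
  have hev3 : ∀ᶠ N : ℕ in atTop, 1 ≤ N := eventually_ge_atTop 1
  obtain ⟨N, ⟨h1, h2⟩, h3⟩ := ((hev1.and hev2).and hev3).exists
  refine ⟨N, h3, fun i j => ?_⟩
  have hNne : (N : ℝ) ≠ 0 := Nat.cast_ne_zero.mpr (by omega)
  have hnorm : (‖QC ^ N‖₊ : ℝ≥0∞) ≤ ENNReal.ofReal (r' ^ N) := by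
    have h4 : (‖QC ^ N‖₊ : ℝ≥0∞) = ((‖QC ^ N‖₊ : ℝ≥0∞) ^ (1 / (N : ℝ))) ^ (N : ℝ) := by
      rw [← ENNReal.rpow_mul, one_div, inv_mul_cancel₀ hNne, ENNReal.rpow_one]
    rw [h4]
    calc ((‖QC ^ N‖₊ : ℝ≥0∞) ^ (1 / (N : ℝ))) ^ (N : ℝ)
        ≤ (ENNReal.ofReal r') ^ (N : ℝ) :=
          ENNReal.rpow_le_rpow (le_of_lt h1) (Nat.cast_nonneg N)
      _ = (ENNReal.ofReal r') ^ N := ENNReal.rpow_natCast _ N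
      _ = ENNReal.ofReal (r' ^ N) := (ENNReal.ofReal_pow hr'0 N).symm
  have hnorm' : ‖QC ^ N‖ ≤ r' ^ N := by
    rw [← enorm_eq_nnnorm, ← ofReal_norm] at hnorm
    exact (ENNReal.ofReal_le_ofReal_iff (pow_nonneg hr'0 N)).mp hnorm
  have hmap : QC ^ N = (Q ^ N).map (algebraMap ℝ ℂ) := by
    rw [hQC, ← RingHom.mapMatrix_apply, ← RingHom.mapMatrix_apply, ← map_pow]
  have hentry : |(Q ^ N) i j| ≤ ‖QC ^ N‖ := by
    have e1 : (QC ^ N) i j = (((Q ^ N) i j : ℝ) : ℂ) := by rw [hmap, Matrix.map_apply]; rfl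
    have h7 := entry_abs_le_linfty (QC ^ N) i j
    rw [e1, Complex.norm_real, Real.norm_eq_abs] at h7
    exact h7
  calc |(Q ^ N) i j| ≤ ‖QC ^ N‖ := hentry
    _ ≤ r' ^ N := hnorm'
    _ ≤ ε := le_of_lt h2

lemma entry_nonneg_pow {n : ℕ} {Q : Matrix (Fin n) (Fin n) ℝ} (hQ : ∀ i j, 0 ≤ Q i j) :
    ∀ N, ∀ i j, 0 ≤ (Q ^ N) i j := by
  intro N
  induction N with
  | zero => intro i j; by_cases h : i = j <;>
      simp [pow_zero, Matrix.one_apply, h, le_refl, zero_le_one]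
  | succ k ih =>
      intro i j
      rw [pow_succ, Matrix.mul_apply]
      exact Finset.sum_nonneg fun l _ => mul_nonneg (ih i l) (hQ l j)

lemma exists_test {n : ℕ} {M : Matrix (Fin n) (Fin n) ℝ} (hM : ∀ i j, 0 ≤ M i j)
    {ρ c : ℝ} (hρ0 : 0 ≤ ρ) (hρc : ρ < c)
    (hspec : ∀ μ : ℂ, IsEigen M μ → ‖μ‖ ≤ ρ) :
    ∃ x : Fin n → ℝ, (∀ i, 0 < x i) ∧ ∀ i, (M *ᵥ x) i ≤ c * x i := by
  have hc0 : 0 < c := lt_of_le_of_lt hρ0 hρc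
  set W : Matrix (Fin n) (Fin n) ℝ := c • (1 : Matrix (Fin n) (Fin n) ℝ) - M with hW
  have hmapW : W.map (algebraMap ℝ ℂ) =
      (c : ℂ) • (1 : Matrix (Fin n) (Fin n) ℂ) - M.map (algebraMap ℝ ℂ) := by
    ext i j
    by_cases h : i = j
    · subst h; simp [hW, Matrix.map_apply, Matrix.smul_apply, Matrix.one_apply,
        Matrix.sub_apply]
    · simp [hW, Matrix.map_apply, Matrix.smul_apply, Matrix.one_apply_ne h, Matrix.sub_apply]
  have hdet : W.det ≠ 0 := by
    intro h
    have hdc : ((c : ℂ) • (1 : Matrix (Fin n) (Fin n) ℂ) - M.map (algebraMap ℝ ℂ)).det = 0 := by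
      have h5 := RingHom.map_det (algebraMap ℝ ℂ) W
      rw [RingHom.mapMatrix_apply] at h5
      rw [← hmapW, ← h5, h, map_zero]
    have h8 : IsEigen M (c : ℂ) := by
      rw [IsEigen, Polynomial.IsRoot, eval_charpoly']; exact hdc
    have h9 := hspec _ h8
    rw [Complex.norm_real, Real.norm_eq_abs, abs_of_pos hc0] at h9
    linarith
  have hWu : IsUnit W.det := Ne.isUnit hdet
  set ones : Fin n → ℝ := fun _ => 1 with hones
  set x : Fin n → ℝ := W⁻¹ *ᵥ ones with hx
  have hWx : W *ᵥ x = ones := by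
    rw [hx, Matrix.mulVec_mulVec, Matrix.mul_nonsing_inv _ hWu, Matrix.one_mulVec]
  have hMx : M *ᵥ x = c • x - ones := by
    have h1 : W *ᵥ x = c • x - M *ᵥ x := by
      rw [hW, Matrix.sub_mulVec, Matrix.smul_mulVec, Matrix.one_mulVec]
    have h2 : ones = c • x - M *ᵥ x := by rw [← h1, hWx]
    rw [eq_sub_iff_add_eq] at h2
    rw [← h2]
    abel
  set Q : Matrix (Fin n) (Fin n) ℝ := c⁻¹ • M with hQ
  have hQnn : ∀ i j, 0 ≤ Q i j := fun i j => by
    rw [hQ, Matrix.smul_apply]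
    exact mul_nonneg (le_of_lt (inv_pos.mpr hc0)) (hM i j)
  have hQspec : ∀ μ : ℂ, IsEigen Q μ → ‖μ‖ ≤ ρ / c := by
    intro μ hμ
    rw [IsEigen, Polynomial.IsRoot, eval_charpoly'] at hμ
    have hQC : Q.map (algebraMap ℝ ℂ) = (c⁻¹ : ℂ) • M.map (algebraMap ℝ ℂ) := by
      ext i j
      simp [hQ, Matrix.map_apply, Matrix.smul_apply]
    have hMc : IsEigen M ((c : ℂ) * μ) := by
      rw [IsEigen, Polynomial.IsRoot, eval_charpoly']
      have hmm : ((c : ℂ) * μ) • (1 : Matrix (Fin n) (Fin n) ℂ) - M.map (algebraMap ℝ ℂ) =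
          (c : ℂ) • (μ • (1 : Matrix (Fin n) (Fin n) ℂ) - Q.map (algebraMap ℝ ℂ)) := by
        rw [hQC, smul_sub, smul_smul, smul_smul]
        congr 1
        rw [mul_inv_cancel₀ (by exact_mod_cast ne_of_gt hc0 : (c:ℂ) ≠ 0), one_smul]
      rw [hmm, Matrix.det_smul, hμ, mul_zero]
    have h9 := hspec _ hMc
    rw [norm_mul, Complex.norm_real, Real.norm_eq_abs, abs_of_pos hc0] at h9
    rw [div_eq_inv_mul, ← mul_le_mul_iff_right₀ hc0, ← mul_assoc, mul_inv_cancel₀ (ne_of_gt hc0),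
      one_mul]
    exact h9
  have hkey : ∀ N : ℕ,
      x = c⁻¹ • ((∑ j ∈ Finset.range N, Q ^ j) *ᵥ ones) + (Q ^ N) *ᵥ x := by
    intro N
    have hgeom : (∑ j ∈ Finset.range N, Q ^ j) * (1 - Q) = 1 - Q ^ N := by
      have h := geom_sum_mul Q N
      have h2 : (∑ j ∈ Finset.range N, Q ^ j) * (1 - Q)
          = -((∑ j ∈ Finset.range N, Q ^ j) * (Q - 1)) := by noncomm_ring
      rw [h2, h, neg_sub]
    have h1Q : (1 - Q) *ᵥ x = c⁻¹ • ones := by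
      rw [Matrix.sub_mulVec, Matrix.one_mulVec, hQ, Matrix.smul_mulVec, hMx,
        smul_sub, smul_smul, inv_mul_cancel₀ (ne_of_gt hc0), one_smul]
      abel
    have h2 : ((∑ j ∈ Finset.range N, Q ^ j) * (1 - Q)) *ᵥ x = x - (Q ^ N) *ᵥ x := by
      rw [hgeom, Matrix.sub_mulVec, Matrix.one_mulVec]
    rw [← Matrix.mulVec_mulVec, h1Q, Matrix.mulVec_smul] at h2
    have h10 := congrArg (fun z => z + (Q ^ N) *ᵥ x) h2
    simpa [sub_add_cancel] using h10.symm
  have hSb : ∀ N : ℕ, 1 ≤ N → ∀ i, 1 ≤ ((∑ j ∈ Finset.range N, Q ^ j) *ᵥ ones) i := by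
    intro N hN i
    have hsum : ((∑ j ∈ Finset.range N, Q ^ j) *ᵥ ones) i
        = ∑ j ∈ Finset.range N, ((Q ^ j) *ᵥ ones) i := by
      have hl : ∀ l, (∑ j ∈ Finset.range N, Q ^ j) i l = ∑ j ∈ Finset.range N, (Q ^ j) i l := by
        intro l
        exact Matrix.sum_apply i l _ _
      simp only [Matrix.mulVec, dotProduct, hl, Finset.sum_mul]
      exact Finset.sum_comm
    rw [hsum]
    have h0 : ((Q ^ 0) *ᵥ ones) i = 1 := by
      rw [pow_zero, Matrix.one_mulVec]
    calc (1 : ℝ) = ((Q ^ 0) *ᵥ ones) i := h0.symm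
      _ ≤ ∑ j ∈ Finset.range N, ((Q ^ j) *ᵥ ones) i := by
          apply Finset.single_le_sum (f := fun j => ((Q ^ j) *ᵥ ones) i)
          · intro j _
            have hh : ((Q ^ j) *ᵥ ones) i = ∑ l, (Q ^ j) i l * 1 := rfl
            rw [hh]
            exact Finset.sum_nonneg fun l _ =>
              mul_nonneg (entry_nonneg_pow hQnn j i l) zero_le_one
          · exact Finset.mem_range.mpr (by omega)
  have hρc1 : ρ / c < 1 := (div_lt_one hc0).mpr hρc
  have hxpos : ∀ i, 0 < x i := by
    intro i
    set B : ℝ := (∑ l, |x l|) + 1 with hB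
    have hB0 : 0 < B := by
      have h11 : 0 ≤ ∑ l, |x l| := Finset.sum_nonneg fun l _ => abs_nonneg _
      linarith
    have hge : c⁻¹ ≤ x i := by
      refine le_of_forall_pos_le_add ?_
      intro ε hε
      obtain ⟨N, hN1, hNb⟩ := pow_entry_small (div_nonneg hρ0 (le_of_lt hc0)) hρc1 hQspec
        (ε / B) (div_pos hε hB0)
      have hrem : |((Q ^ N) *ᵥ x) i| ≤ ε := by
        have h1 : ((Q ^ N) *ᵥ x) i = ∑ l, (Q ^ N) i l * x l := rfl
        rw [h1]
        calc |∑ l, (Q ^ N) i l * x l| ≤ ∑ l, |(Q ^ N) i l * x l| :=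
              Finset.abs_sum_le_sum_abs _ _
          _ ≤ ∑ l, (ε / B) * |x l| := by
              apply Finset.sum_le_sum
              intro l _
              rw [abs_mul]
              exact mul_le_mul_of_nonneg_right (hNb i l) (abs_nonneg _)
          _ = (ε / B) * ∑ l, |x l| := by rw [← Finset.mul_sum]
          _ ≤ (ε / B) * B := by
              apply mul_le_mul_of_nonneg_left _ (le_of_lt (div_pos hε hB0))
              rw [hB]; linarith
          _ = ε := by field_simp
      have hkeyi := congrFun (hkey N) i
      have h12 : x i = c⁻¹ * ((∑ j ∈ Finset.range N, Q ^ j) *ᵥ ones) i + ((Q ^ N) *ᵥ x) i := by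
        simpa [Pi.add_apply, Pi.smul_apply, smul_eq_mul] using hkeyi
      rw [h12]
      have h5 : c⁻¹ * 1 ≤ c⁻¹ * ((∑ j ∈ Finset.range N, Q ^ j) *ᵥ ones) i :=
        mul_le_mul_of_nonneg_left (hSb N hN1 i) (le_of_lt (inv_pos.mpr hc0))
      have h6 : -ε ≤ ((Q ^ N) *ᵥ x) i := neg_le_of_abs_le hrem
      linarith [h5]
    exact lt_of_lt_of_le (inv_pos.mpr hc0) hge
  refine ⟨x, hxpos, fun i => ?_⟩
  rw [hMx]
  have h13 : (c • x - ones) i = c * x i - 1 := rfl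
  rw [h13]
  linarith [hxpos i]

end AuxSpec

section AuxMat

lemma mat_ext_mulVec {a b : ℕ} {M N : Matrix (Fin a) (Fin b) ℝ}
    (h : ∀ v, M *ᵥ v = N *ᵥ v) : M = N := by
  ext i j
  have h1 := congrFun (h (Pi.single j 1)) i
  simpa [Matrix.mulVec_single] using h1

lemma left_cancel {a b q : ℕ} {A : Matrix (Fin a) (Fin b) ℝ}
    (hker : ∀ v, A *ᵥ v = 0 → v = 0) {X Y : Matrix (Fin b) (Fin q) ℝ}
    (h : A * X = A * Y) : X = Y := by
  apply mat_ext_mulVec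
  intro v
  have h1 : A *ᵥ (X *ᵥ v - Y *ᵥ v) = 0 := by
    rw [Matrix.mulVec_sub, Matrix.mulVec_mulVec, Matrix.mulVec_mulVec, h, sub_self]
  have h2 := hker _ h1
  exact sub_eq_zero.mp h2

lemma range_mul_right {a b : ℕ} (A : Matrix (Fin a) (Fin b) ℝ) (Ad : Matrix (Fin b) (Fin a) ℝ)
    (h : A * Ad * A = A) :
    LinearMap.range (A * Ad).mulVecLin = LinearMap.range A.mulVecLin := by
  apply le_antisymm
  · rw [Matrix.mulVecLin_mul]
    exact LinearMap.range_comp_le_range _ _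
  · conv_lhs => rw [← h]
    rw [Matrix.mulVecLin_mul]
    exact LinearMap.range_comp_le_range _ _

lemma proj_unique {a : ℕ} {P Q : Matrix (Fin a) (Fin a) ℝ}
    (hPs : Pᵀ = P) (hQs : Qᵀ = Q) (hPP : P * P = P) (hQQ : Q * Q = Q)
    (hR : LinearMap.range P.mulVecLin = LinearMap.range Q.mulVecLin) : P = Q := by
  have hfix : ∀ (R S : Matrix (Fin a) (Fin a) ℝ), R * R = R →
      LinearMap.range S.mulVecLin ≤ LinearMap.range R.mulVecLin → R * S = S := by
    intro R S hRR hle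
    apply mat_ext_mulVec
    intro v
    have h1 : S.mulVecLin v ∈ LinearMap.range R.mulVecLin := hle ⟨v, rfl⟩
    obtain ⟨w, hw⟩ := h1
    rw [Matrix.mulVecLin_apply, Matrix.mulVecLin_apply] at hw
    have h2 : (R * S) *ᵥ v = R *ᵥ (S *ᵥ v) := (Matrix.mulVec_mulVec _ _ _).symm
    rw [h2, ← hw, Matrix.mulVec_mulVec, hRR, hw]
  have hPQ : P * Q = Q := hfix P Q hPP (le_of_eq hR.symm)
  have hQP : Q * P = P := hfix Q P hQQ (le_of_eq hR)
  have h3 : Pᵀ * Qᵀ = Pᵀ := by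
    have := congrArg Matrix.transpose hQP
    rwa [Matrix.transpose_mul] at this
  rw [hPs, hQs] at h3
  rw [← hPQ, h3]

lemma entry_nonneg_mul {a b q : ℕ} {A : Matrix (Fin a) (Fin b) ℝ} {B : Matrix (Fin b) (Fin q) ℝ}
    (hA : ∀ i j, 0 ≤ A i j) (hB : ∀ i j, 0 ≤ B i j) : ∀ i j, 0 ≤ (A * B) i j := by
  intro i j
  rw [Matrix.mul_apply]
  exact Finset.sum_nonneg fun l _ => mul_nonneg (hA i l) (hB l j)

lemma diag_mul_apply {a q : ℕ} {Ek : Matrix (Fin a) (Fin a) ℝ}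
    (hdiag : ∀ i j, i ≠ j → Ek i j = 0) (M : Matrix (Fin a) (Fin q) ℝ) (i : Fin a) (j : Fin q) :
    (Ek * M) i j = Ek i i * M i j := by
  rw [Matrix.mul_apply]
  exact Finset.sum_eq_single i (fun l _ hl => by rw [hdiag i l (Ne.symm hl), zero_mul])
    (fun h => absurd (Finset.mem_univ i) h)

lemma sum_mulVec_apply {ι : Type*} {a b : ℕ} (s : Finset ι)
    (f : ι → Matrix (Fin a) (Fin b) ℝ) (v : Fin b → ℝ) (i : Fin a) :
    ((∑ k ∈ s, f k) *ᵥ v) i = ∑ k ∈ s, ((f k) *ᵥ v) i := by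
  have hl : ∀ l, (∑ k ∈ s, f k) i l = ∑ k ∈ s, f k i l := fun l => Matrix.sum_apply i l _ _
  simp only [Matrix.mulVec, dotProduct, hl, Finset.sum_mul]
  exact Finset.sum_comm

end AuxMat

theorem stmt17 {m n p : ℕ} (A : Matrix (Fin m) (Fin n) ℝ)
    (U₁ V₁ U₂ V₂ : Fin p → Matrix (Fin m) (Fin n) ℝ)
    (U₁d U₂d : Fin p → Matrix (Fin n) (Fin m) ℝ)
    (E : Fin p → Matrix (Fin n) (Fin n) ℝ)
    (Ad : Matrix (Fin n) (Fin m) ℝ) (hA : IsMP A Ad) (hsemi : EntryNonneg Ad)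
    (hAnn : EntryNonneg A)
    (hps1 : ∀ k, ProperSplitting A (U₁ k) (V₁ k)) (hU1 : ∀ k, IsMP (U₁ k) (U₁d k))
    (hps2 : ∀ k, ProperSplitting A (U₂ k) (V₂ k)) (hU2 : ∀ k, IsMP (U₂ k) (U₂d k))
    (hE0 : ∀ k, EntryNonneg (E k)) (hEdiag : ∀ k, ∀ i j, i ≠ j → E k i j = 0)
    (hEsum : ∑ k, E k = 1)
    (hU1d : ∀ k, EntryNonneg (U₁d k)) (hU1dV : ∀ k, EntryNonneg (U₁d k * V₁ k))
    (hU2d : ∀ k, EntryNonneg (U₂d k)) (hU2dV : ∀ k, EntryNonneg (U₂d k * V₂ k))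
    (hrange : ∀ k, LinearMap.range (E k).mulVecLin ≤ LinearMap.range (Aᵀ).mulVecLin)
    (hVle : ∀ k, EntryLE (V₁ k) (V₂ k)) :
    specRad (∑ k, E k * U₁d k * V₁ k) ≤ specRad (∑ k, E k * U₂d k * V₂ k) ∧
    specRad (∑ k, E k * U₂d k * V₂ k) < 1 := by
  classical
  set H₁ := ∑ k, E k * U₁d k * V₁ k with hH₁
  set H₂ := ∑ k, E k * U₂d k * V₂ k with hH₂
  -- A has full column rank
  have hsurj : ∀ v : Fin n → ℝ, ∃ w, Aᵀ *ᵥ w = v := by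
    intro v
    have h1 : v = (∑ k, E k) *ᵥ v := by rw [hEsum, Matrix.one_mulVec]
    have hmem : ((∑ k, E k) *ᵥ v) ∈ LinearMap.range (Aᵀ).mulVecLin := by
      have h2 : ∀ i, ((∑ k, E k) *ᵥ v) i = (∑ k, ((E k) *ᵥ v)) i := by
        intro i
        rw [sum_mulVec_apply]
        exact (Finset.sum_apply i _ _).symm
      rw [funext h2]
      apply Submodule.sum_mem
      intro k _
      exact hrange k ⟨v, Matrix.mulVecLin_apply _ _⟩
    rw [← h1] at hmem
    obtain ⟨w, hw⟩ := hmem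
    exact ⟨w, by rw [← Matrix.mulVecLin_apply]; exact hw⟩
  have hkerA : ∀ v, A *ᵥ v = 0 → v = 0 := by
    intro v hv
    obtain ⟨w, hw⟩ := hsurj v
    have h1 : v ⬝ᵥ v = 0 := by
      nth_rewrite 1 [← hw]
      rw [Matrix.mulVec_transpose, ← dotProduct_mulVec, hv, dotProduct_zero]
    exact (dotProduct_self_eq_zero).mp h1
  have hkerU1 : ∀ k, ∀ v, U₁ k *ᵥ v = 0 → v = 0 := by
    intro k v hv
    apply hkerA v
    have h1 : v ∈ LinearMap.ker (U₁ k).mulVecLin := by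
      rw [LinearMap.mem_ker, Matrix.mulVecLin_apply]; exact hv
    rw [(hps1 k).2.2, LinearMap.mem_ker, Matrix.mulVecLin_apply] at h1
    exact h1
  have hkerU2 : ∀ k, ∀ v, U₂ k *ᵥ v = 0 → v = 0 := by
    intro k v hv
    apply hkerA v
    have h1 : v ∈ LinearMap.ker (U₂ k).mulVecLin := by
      rw [LinearMap.mem_ker, Matrix.mulVecLin_apply]; exact hv
    rw [(hps2 k).2.2, LinearMap.mem_ker, Matrix.mulVecLin_apply] at h1
    exact h1
  -- left inverses
  have hAdA : Ad * A = 1 := left_cancel hkerA (by rw [← Matrix.mul_assoc, hA.1, Matrix.mul_one])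
  have hU1dU : ∀ k, U₁d k * U₁ k = 1 := fun k =>
    left_cancel (hkerU1 k) (by rw [← Matrix.mul_assoc, (hU1 k).1, Matrix.mul_one])
  have hU2dU : ∀ k, U₂d k * U₂ k = 1 := fun k =>
    left_cancel (hkerU2 k) (by rw [← Matrix.mul_assoc, (hU2 k).1, Matrix.mul_one])
  -- projector identities
  have hproj1 : ∀ k, U₁ k * U₁d k = A * Ad := by
    intro k
    apply proj_unique ((hU1 k).2.2.1) (hA.2.2.1)
    · rw [← Matrix.mul_assoc, (hU1 k).1]
    · rw [← Matrix.mul_assoc, hA.1]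
    · exact (range_mul_right _ _ (hU1 k).1).trans
        (((hps1 k).2.1).trans (range_mul_right A Ad hA.1).symm)
  have hproj2 : ∀ k, U₂ k * U₂d k = A * Ad := by
    intro k
    apply proj_unique ((hU2 k).2.2.1) (hA.2.2.1)
    · rw [← Matrix.mul_assoc, (hU2 k).1]
    · rw [← Matrix.mul_assoc, hA.1]
    · exact (range_mul_right _ _ (hU2 k).1).trans
        (((hps2 k).2.1).trans (range_mul_right A Ad hA.1).symm)
  -- U₂ = U₁ + Δ
  have hΔ : ∀ k, U₂ k = U₁ k + (V₂ k - V₁ k) := by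
    intro k
    have h : U₁ k - V₁ k = U₂ k - V₂ k := by rw [← (hps1 k).1, ← (hps2 k).1]
    have h2 : U₂ k - V₂ k + V₂ k = U₁ k - V₁ k + V₂ k := by rw [h]
    calc U₂ k = U₂ k - V₂ k + V₂ k := by abel
      _ = U₁ k - V₁ k + V₂ k := h2
      _ = U₁ k + (V₂ k - V₁ k) := by abel
  have hΔnn : ∀ k, ∀ i j, 0 ≤ (V₂ k - V₁ k) i j := by
    intro k i j
    rw [Matrix.sub_apply]
    exact sub_nonneg.mpr (hVle k i j)
  -- monotonicity of the U-inverses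
  have hUdid : ∀ k, U₁d k = U₂d k + U₁d k * (V₂ k - V₁ k) * U₂d k := by
    intro k
    have h1 : U₁d k * (U₁ k * U₁d k) = U₁d k := by
      rw [← Matrix.mul_assoc]; exact (hU1 k).2.1
    have h4 : U₁d k * U₂ k = 1 + U₁d k * (V₂ k - V₁ k) := by
      rw [hΔ k, Matrix.mul_add, hU1dU k]
    calc U₁d k = U₁d k * (U₁ k * U₁d k) := h1.symm
      _ = U₁d k * U₂ k * U₂d k := by
          rw [hproj1 k, ← hproj2 k, ← Matrix.mul_assoc]
      _ = (1 + U₁d k * (V₂ k - V₁ k)) * U₂d k := by rw [h4]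
      _ = U₂d k + U₁d k * (V₂ k - V₁ k) * U₂d k := by
          rw [Matrix.add_mul, Matrix.one_mul]
  have hmono : ∀ k, ∀ i j, U₂d k i j ≤ U₁d k i j := by
    intro k i j
    have h2 : 0 ≤ (U₁d k * (V₂ k - V₁ k) * U₂d k) i j :=
      entry_nonneg_mul (entry_nonneg_mul (hU1d k) (hΔnn k)) (hU2d k) i j
    have h1 := congrFun (congrFun (hUdid k) i) j
    rw [Matrix.add_apply] at h1
    linarith
  -- iteration matrices as 1 - UdA
  have hTid1 : ∀ k, U₁d k * V₁ k = 1 - U₁d k * A := by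
    intro k
    have hV : V₁ k = U₁ k - A := by rw [(hps1 k).1]; abel
    rw [hV, Matrix.mul_sub, hU1dU k]
  have hTid2 : ∀ k, U₂d k * V₂ k = 1 - U₂d k * A := by
    intro k
    have hV : V₂ k = U₂ k - A := by rw [(hps2 k).1]; abel
    rw [hV, Matrix.mul_sub, hU2dU k]
  -- nonnegativity of H₁, H₂
  have hH1nn : ∀ i j, 0 ≤ H₁ i j := by
    intro i j
    rw [hH₁, Matrix.sum_apply]
    apply Finset.sum_nonneg
    intro k _
    rw [Matrix.mul_assoc, diag_mul_apply (hEdiag k)]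
    exact mul_nonneg (hE0 k i i) (hU1dV k i j)
  have hH2nn : ∀ i j, 0 ≤ H₂ i j := by
    intro i j
    rw [hH₂, Matrix.sum_apply]
    apply Finset.sum_nonneg
    intro k _
    rw [Matrix.mul_assoc, diag_mul_apply (hEdiag k)]
    exact mul_nonneg (hE0 k i i) (hU2dV k i j)
  -- H₁ ≤ H₂ entrywise
  have hle12 : ∀ i j, H₁ i j ≤ H₂ i j := by
    intro i j
    rw [hH₁, hH₂, Matrix.sum_apply, Matrix.sum_apply]
    apply Finset.sum_le_sum
    intro k _
    rw [Matrix.mul_assoc, Matrix.mul_assoc, diag_mul_apply (hEdiag k), diag_mul_apply (hEdiag k)]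
    apply mul_le_mul_of_nonneg_left _ (hE0 k i i)
    rw [hTid1 k, hTid2 k, Matrix.sub_apply, Matrix.sub_apply]
    have h2 : (U₂d k * A) i j ≤ (U₁d k * A) i j := by
      rw [Matrix.mul_apply, Matrix.mul_apply]
      exact Finset.sum_le_sum fun l _ =>
        mul_le_mul_of_nonneg_right (hmono k i l) (hAnn l j)
    linarith
  -- the positive test vector for H₂
  set x : Fin n → ℝ := Ad *ᵥ (fun _ => (1:ℝ)) with hxdef
  have hxpos : ∀ i, 0 < x i := by
    intro i
    have h1 : (Ad * A) i i = 1 := by rw [hAdA]; exact Matrix.one_apply_eq i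
    rw [Matrix.mul_apply] at h1
    have h2 : ∃ l, Ad i l * A l i ≠ 0 := by
      by_contra hcon
      push_neg at hcon
      rw [Finset.sum_eq_zero (fun l _ => hcon l)] at h1
      exact one_ne_zero h1.symm
    obtain ⟨l, hl⟩ := h2
    have h3 : 0 < Ad i l := lt_of_le_of_ne (hsemi i l)
      (fun hh => hl (by rw [← hh, zero_mul]))
    have h4 : x i = ∑ j, Ad i j * 1 := rfl
    rw [h4]
    calc (0:ℝ) < Ad i l * 1 := by rw [mul_one]; exact h3
      _ ≤ ∑ j, Ad i j * 1 := Finset.single_le_sum (f := fun j => Ad i j * 1)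
          (fun j _ => mul_nonneg (hsemi i j) zero_le_one) (Finset.mem_univ l)
  have hU2dAAd : ∀ k, U₂d k * (A * Ad) = U₂d k := by
    intro k
    rw [← hproj2 k, ← Matrix.mul_assoc]
    exact (hU2 k).2.1
  have hH2Ad : H₂ * Ad = Ad - (∑ k, E k * U₂d k) := by
    rw [hH₂, Matrix.sum_mul]
    have hterm : ∀ k, (E k * U₂d k * V₂ k) * Ad = E k * Ad - E k * U₂d k := by
      intro k
      have h1 : (U₂d k * V₂ k) * Ad = Ad - U₂d k := by
        rw [hTid2 k, Matrix.sub_mul, Matrix.one_mul, Matrix.mul_assoc, hU2dAAd k]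
      calc E k * U₂d k * V₂ k * Ad = (E k * (U₂d k * V₂ k)) * Ad := by
            rw [Matrix.mul_assoc (E k)]
        _ = E k * ((U₂d k * V₂ k) * Ad) := by rw [Matrix.mul_assoc]
        _ = E k * (Ad - U₂d k) := by rw [h1]
        _ = E k * Ad - E k * U₂d k := Matrix.mul_sub _ _ _
    rw [Finset.sum_congr rfl (fun k _ => hterm k), Finset.sum_sub_distrib,
      ← Matrix.sum_mul, hEsum, Matrix.one_mul]
  set g : Fin n → ℝ := (∑ k, E k * U₂d k) *ᵥ (fun _ => (1:ℝ)) with hgdef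
  have hH2x : H₂ *ᵥ x = x - g := by
    have h1 : H₂ *ᵥ x = (H₂ * Ad) *ᵥ (fun _ => (1:ℝ)) := by
      rw [hxdef, Matrix.mulVec_mulVec]
    rw [h1, hH2Ad, Matrix.sub_mulVec]
  have hgpos : ∀ i, 0 < g i := by
    intro i
    have hsum1 : ∑ k, E k i i = 1 := by
      have h := congrFun (congrFun hEsum i) i
      rw [Matrix.one_apply_eq] at h
      rw [← h]
      exact (Matrix.sum_apply i i _ _).symm
    have h2 : ∃ k, E k i i ≠ 0 := by
      by_contra hcon
      push_neg at hcon
      rw [Finset.sum_eq_zero (fun k _ => hcon k)] at hsum1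
      exact one_ne_zero hsum1.symm
    obtain ⟨k₀, hk₀⟩ := h2
    have hk₀' : 0 < E k₀ i i := lt_of_le_of_ne (hE0 k₀ i i) (Ne.symm hk₀)
    have h3 : (U₂d k₀ * U₂ k₀) i i = 1 := by rw [hU2dU k₀]; exact Matrix.one_apply_eq i
    rw [Matrix.mul_apply] at h3
    have h4 : ∃ l, U₂d k₀ i l * U₂ k₀ l i ≠ 0 := by
      by_contra hcon
      push_neg at hcon
      rw [Finset.sum_eq_zero (fun l _ => hcon l)] at h3
      exact one_ne_zero h3.symm
    obtain ⟨l₀, hl₀⟩ := h4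
    have h5 : 0 < U₂d k₀ i l₀ := lt_of_le_of_ne (hU2d k₀ i l₀)
      (fun hh => hl₀ (by rw [← hh, zero_mul]))
    have hrow : 0 < ((U₂d k₀) *ᵥ (fun _ => (1:ℝ))) i := by
      have h6 : ((U₂d k₀) *ᵥ (fun _ => (1:ℝ))) i = ∑ j, U₂d k₀ i j * 1 := rfl
      rw [h6]
      calc (0:ℝ) < U₂d k₀ i l₀ * 1 := by rw [mul_one]; exact h5
        _ ≤ ∑ j, U₂d k₀ i j * 1 := Finset.single_le_sum (f := fun j => U₂d k₀ i j * 1)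
            (fun j _ => mul_nonneg (hU2d k₀ i j) zero_le_one) (Finset.mem_univ l₀)
    have h8 : ∀ k, ((E k * U₂d k) *ᵥ (fun _ => (1:ℝ))) i
        = E k i i * ((U₂d k) *ᵥ (fun _ => (1:ℝ))) i := by
      intro k
      have h9 : ∀ j, (E k * U₂d k) i j = E k i i * U₂d k i j :=
        fun j => diag_mul_apply (hEdiag k) _ i j
      have h10 : ((E k * U₂d k) *ᵥ (fun _ => (1:ℝ))) i = ∑ j, (E k * U₂d k) i j * 1 := rfl
      have h11 : ((U₂d k) *ᵥ (fun _ => (1:ℝ))) i = ∑ j, U₂d k i j * 1 := rfl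
      rw [h10, h11, Finset.mul_sum]
      apply Finset.sum_congr rfl
      intro j _
      rw [h9 j, mul_assoc]
    have h7 : g i = ∑ k, ((E k * U₂d k) *ᵥ (fun _ => (1:ℝ))) i := sum_mulVec_apply _ _ _ i
    rw [h7, Finset.sum_congr rfl (fun k _ => h8 k)]
    calc (0:ℝ) < E k₀ i i * ((U₂d k₀) *ᵥ (fun _ => (1:ℝ))) i := mul_pos hk₀' hrow
      _ ≤ ∑ k, E k i i * ((U₂d k) *ᵥ (fun _ => (1:ℝ))) i := by
          apply Finset.single_le_sum (f := fun k => E k i i * ((U₂d k) *ᵥ (fun _ => (1:ℝ))) i)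
          · intro k _
            apply mul_nonneg (hE0 k i i)
            have h12 : ((U₂d k) *ᵥ (fun _ => (1:ℝ))) i = ∑ j, U₂d k i j * 1 := rfl
            rw [h12]
            exact Finset.sum_nonneg fun j _ => mul_nonneg (hU2d k i j) zero_le_one
          · exact Finset.mem_univ k₀
  -- Part 2 : specRad H₂ < 1
  have hpart2 : specRad H₂ < 1 := by
    rcases isEmpty_or_nonempty (Fin n) with hE | hNE
    · have h1 := specRad_le_test (M := H₂) hH2nn (x := fun _ => 1)
        (fun i => hE.elim i) (by norm_num : (0:ℝ) ≤ 1/2) (fun i => hE.elim i)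
      linarith
    · obtain ⟨i₀⟩ := hNE
      have hne : (Finset.univ : Finset (Fin n)).Nonempty := ⟨i₀, Finset.mem_univ _⟩
      set c := Finset.univ.sup' hne (fun i => 1 - g i / x i) with hc
      have hcx : ∀ i, (H₂ *ᵥ x) i ≤ c * x i := by
        intro i
        have h1 : (H₂ *ᵥ x) i = x i - g i := by rw [hH2x]; rfl
        have h2 : 1 - g i / x i ≤ c := by
          rw [hc]; exact Finset.le_sup' (fun i => 1 - g i / x i) (Finset.mem_univ i)
        rw [h1]
        have h3 : x i - g i = (1 - g i / x i) * x i := by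
          rw [sub_mul, one_mul, div_mul_cancel₀ _ (ne_of_gt (hxpos i))]
        rw [h3]
        exact mul_le_mul_of_nonneg_right h2 (le_of_lt (hxpos i))
      have hclt : c < 1 := by
        rw [hc]
        apply (Finset.sup'_lt_iff hne).mpr
        intro i _
        have h4 := div_pos (hgpos i) (hxpos i)
        linarith
      have hc'0 : (0:ℝ) ≤ max c 0 := le_max_right _ _
      have hc'1 : max c 0 < 1 := max_lt hclt one_pos
      have hcx' : ∀ i, (H₂ *ᵥ x) i ≤ max c 0 * x i := fun i =>
        le_trans (hcx i) (mul_le_mul_of_nonneg_right (le_max_left _ _) (le_of_lt (hxpos i)))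
      exact lt_of_le_of_lt (specRad_le_test hH2nn hxpos hc'0 hcx') hc'1
  -- Part 1 : specRad H₁ ≤ specRad H₂
  have hpart1 : specRad H₁ ≤ specRad H₂ := by
    apply Real.sSup_le _ (specRad_nonneg H₂)
    rintro r ⟨μ, hμ, rfl⟩
    by_contra hcon
    push_neg at hcon
    set c := (specRad H₂ + ‖μ‖) / 2 with hc
    have h0 : 0 ≤ specRad H₂ := specRad_nonneg H₂
    have hρc : specRad H₂ < c := by rw [hc]; linarith
    have hcμ : c < ‖μ‖ := by rw [hc]; linarith
    obtain ⟨y, hy, hyc⟩ := exists_test hH2nn h0 hρc (fun ν hν => abs_le_specRad hν)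
    have h1 : ∀ i, (H₁ *ᵥ y) i ≤ c * y i := by
      intro i
      have h2 : (H₁ *ᵥ y) i ≤ (H₂ *ᵥ y) i := by
        have e1 : (H₁ *ᵥ y) i = ∑ j, H₁ i j * y j := rfl
        have e2 : (H₂ *ᵥ y) i = ∑ j, H₂ i j * y j := rfl
        rw [e1, e2]
        exact Finset.sum_le_sum fun j _ =>
          mul_le_mul_of_nonneg_right (hle12 i j) (le_of_lt (hy j))
      linarith [hyc i]
    have h5 := eigen_abs_le hH1nn hy h1 hμ
    linarith
  exact ⟨hpart1, hpart2⟩
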